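/- For η > 0 and ψ ∈ ℝ, 1/(cosh η − cos ψ)² = (1/sinh³η)·Σ_{n=0}^∞ ε_n·cos(nψ)·e^{−nη}·(cosh η + n·sinh η), where ε_n = 2 − δ_{n,0}, and the series converges absolutely. -/

import Mathlib

noncomputable def neumann (n : ℕ) : ℝ := if n = 0 then 1 else 2

set_option maxHeartbeats 2000000 in
theorem inv_sq_cosh_sub_cos_fourier (η ψ : ℝ) (hη : 0 < η) :
    (Summable fun n : ℕ =>
      |neumann n * Real.cos (n * ψ) * Real.exp (-(n : ℝ) * η) *
        (Real.cosh η + n * Real.sinh η)|) ∧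
    1 / (Real.cosh η - Real.cos ψ) ^ 2 =
      (1 / Real.sinh η ^ 3) *
        ∑' n : ℕ, neumann n * Real.cos (n * ψ) * Real.exp (-(n : ℝ) * η) *
          (Real.cosh η + n * Real.sinh η) := by
  have hs : 0 < Real.sinh η := Real.sinh_pos_iff.mpr hη
  have hch : 1 < Real.cosh η := Real.one_lt_cosh.mpr hη.ne'
  have hc : 0 < Real.cosh η - Real.cos ψ := by
    have := Real.cos_le_one ψ; linarith
  -- geometric ratio
  have hr0 : 0 < Real.exp (-η) := Real.exp_pos _
  have hr1 : Real.exp (-η) < 1 := Real.exp_lt_one_iff.mpr (by linarith)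
  -- Summability of the absolute values
  have hsum1 : Summable fun n : ℕ => (2 * Real.cosh η) * Real.exp (-η) ^ n :=
    (summable_geometric_of_lt_one hr0.le hr1).mul_left _
  have hsum2 : Summable fun n : ℕ => (2 * Real.sinh η) * ((n : ℝ) * Real.exp (-η) ^ n) :=
    ((hasSum_coe_mul_geometric_of_norm_lt_one (r := Real.exp (-η))
      (by rw [Real.norm_eq_abs, abs_of_pos hr0]; exact hr1)).summable).mul_left _
  have habs : Summable fun n : ℕ =>
      |neumann n * Real.cos (n * ψ) * Real.exp (-(n : ℝ) * η) *
        (Real.cosh η + n * Real.sinh η)| := by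
    refine Summable.of_nonneg_of_le (f := fun n : ℕ => (2 * Real.cosh η) * Real.exp (-η) ^ n
        + (2 * Real.sinh η) * ((n : ℝ) * Real.exp (-η) ^ n))
      (fun n => abs_nonneg _) (fun n => ?_) (hsum1.add hsum2)
    have he : Real.exp (-(n : ℝ) * η) = Real.exp (-η) ^ n := by
      rw [← Real.exp_nat_mul]; ring_nf
    have hnm : |neumann n| ≤ 2 := by
      unfold neumann; split <;> norm_num
    have hcos : |Real.cos (n * ψ)| ≤ 1 := Real.abs_cos_le_one _
    have hpos : 0 ≤ Real.cosh η + n * Real.sinh η := by positivity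
    calc |neumann n * Real.cos (n * ψ) * Real.exp (-(n : ℝ) * η) *
            (Real.cosh η + n * Real.sinh η)|
        = |neumann n| * |Real.cos (n * ψ)| * Real.exp (-(n : ℝ) * η) *
            (Real.cosh η + n * Real.sinh η) := by
          rw [abs_mul, abs_mul, abs_mul, abs_of_nonneg (Real.exp_pos _).le,
            abs_of_nonneg hpos]
      _ ≤ 2 * 1 * Real.exp (-(n : ℝ) * η) * (Real.cosh η + n * Real.sinh η) := by
          gcongr
      _ = (2 * Real.cosh η) * Real.exp (-η) ^ n
            + (2 * Real.sinh η) * ((n : ℝ) * Real.exp (-η) ^ n) := by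
          rw [he]; ring
  refine ⟨habs, ?_⟩
  -- complex setup
  set w : ℂ := Complex.exp (-η + ψ * Complex.I) with hwdef
  have hwn : ‖w‖ < 1 := by
    rw [hwdef, Complex.norm_exp]
    simpa using hr1
  set S : ℂ := ((2 * Real.cosh η : ℝ) : ℂ) * (1 - w)⁻¹
      + ((2 * Real.sinh η : ℝ) : ℂ) * (w / (1 - w) ^ 2)
      - ((Real.cosh η : ℝ) : ℂ) with hSdef
  have h1 : HasSum (fun n : ℕ => ((2 * Real.cosh η : ℝ) : ℂ) * w ^ n)
      (((2 * Real.cosh η : ℝ) : ℂ) * (1 - w)⁻¹) :=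
    (hasSum_geometric_of_norm_lt_one hwn).mul_left _
  have h2 : HasSum (fun n : ℕ => ((2 * Real.sinh η : ℝ) : ℂ) * ((n : ℂ) * w ^ n))
      (((2 * Real.sinh η : ℝ) : ℂ) * (w / (1 - w) ^ 2)) :=
    (hasSum_coe_mul_geometric_of_norm_lt_one hwn).mul_left _
  have h3 : HasSum (fun n : ℕ => if n = 0 then ((Real.cosh η : ℝ) : ℂ) else 0)
      ((Real.cosh η : ℝ) : ℂ) := hasSum_ite_eq 0 _
  have hf : HasSum (fun n : ℕ =>
      ((neumann n * (Real.cosh η + n * Real.sinh η) : ℝ) : ℂ) * w ^ n) S := by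
    have H := (h1.add h2).sub h3
    convert H using 1
    · rfl
    funext n
    match n with
    | 0 => simp [neumann]; ring
    | (n + 1) =>
      simp only [neumann, if_neg (Nat.succ_ne_zero n)]
      push_cast
      ring
  -- take real parts
  have hre := Complex.hasSum_re hf
  have hterm : (fun n : ℕ =>
      (((neumann n * (Real.cosh η + n * Real.sinh η) : ℝ) : ℂ) * w ^ n).re)
      = fun n : ℕ => neumann n * Real.cos (n * ψ) * Real.exp (-(n : ℝ) * η) *
          (Real.cosh η + n * Real.sinh η) := by
    funext n
    have hwp : w ^ n = Complex.exp ((n : ℂ) * (-η + ψ * Complex.I)) := by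
      rw [hwdef, Complex.exp_nat_mul]
    have hre2 : (w ^ n).re = Real.exp (-(n : ℝ) * η) * Real.cos (n * ψ) := by
      rw [hwp, Complex.exp_re]
      have e1 : ((n : ℂ) * (-↑η + ↑ψ * Complex.I)).re = -(n : ℝ) * η := by
        simp [Complex.mul_re]
      have e2 : ((n : ℂ) * (-↑η + ↑ψ * Complex.I)).im = (n : ℝ) * ψ := by
        simp [Complex.mul_im]
      rw [e1, e2]
    rw [Complex.re_ofReal_mul, hre2]; ring
  rw [hterm] at hre
  rw [hre.tsum_eq]
  -- now compute S.re
  have hSre : S.re = Real.sinh η ^ 3 / (Real.cosh η - Real.cos ψ) ^ 2 := by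
    set Ec : ℂ := ((Real.exp η : ℝ) : ℂ) with hEc
    have hEgt : 1 < Real.exp η := by
      rw [← Real.exp_zero]; exact Real.exp_lt_exp.mpr hη
    have hE0 : Ec ≠ 0 := by
      rw [hEc]; exact_mod_cast (Real.exp_pos η).ne'
    set p : ℂ := Complex.exp (ψ * Complex.I) with hpdef
    have hp0 : p ≠ 0 := Complex.exp_ne_zero _
    have hpinv : p⁻¹ = Complex.exp (-(↑ψ * Complex.I)) := by
      rw [hpdef, ← Complex.exp_neg]
    have hEinv : Complex.exp (-(η : ℂ)) = Ec⁻¹ := by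
      rw [hEc, ← Complex.ofReal_inv, ← Real.exp_neg, Complex.ofReal_exp,
        Complex.ofReal_neg]
    have hu : w = Ec⁻¹ * p := by
      rw [hwdef, Complex.exp_add, hEinv, hpdef]
    have hconjw : (starRingEnd ℂ) w = Ec⁻¹ * p⁻¹ := by
      rw [hwdef, ← Complex.exp_conj]
      have h4 : (starRingEnd ℂ) (-(η:ℂ) + (ψ:ℂ) * Complex.I)
          = -(η:ℂ) + (-((ψ:ℂ) * Complex.I)) := by
        simp [Complex.conj_I]
      rw [h4, Complex.exp_add, hEinv, ← hpinv]
    have hcoshE : ((Real.cosh η : ℝ) : ℂ) = (Ec + Ec⁻¹) / 2 := by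
      rw [Real.cosh_eq, Real.exp_neg]; push_cast; rw [hEc, Complex.ofReal_exp]
    have hsinhE : ((Real.sinh η : ℝ) : ℂ) = (Ec - Ec⁻¹) / 2 := by
      rw [Real.sinh_eq, Real.exp_neg]; push_cast; rw [hEc, Complex.ofReal_exp]
    have hcosp : ((Real.cos ψ : ℝ) : ℂ) = (p + p⁻¹) / 2 := by
      rw [hpinv, hpdef,
        show -((ψ:ℂ) * Complex.I) = ((-ψ : ℝ) : ℂ) * Complex.I by push_cast; ring,
        Complex.exp_mul_I, Complex.exp_mul_I, ← Complex.ofReal_cos,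
        ← Complex.ofReal_sin, ← Complex.ofReal_cos, ← Complex.ofReal_sin,
        Real.cos_neg, Real.sin_neg]
      push_cast
      ring
    have hp1 : ‖p‖ = 1 := by
      rw [hpdef, Complex.norm_exp]; simp
    have hA : (1 : ℂ) - Ec⁻¹ * p ≠ 0 := by
      intro h
      rw [sub_eq_zero] at h
      have h2 : ‖Ec⁻¹ * p‖ = 1 := by rw [← h]; simp
      rw [norm_mul, hp1, mul_one, norm_inv, hEc, Complex.norm_real, Real.norm_eq_abs,
        abs_of_pos (Real.exp_pos η)] at h2
      have : Real.exp η = 1 := by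
        field_simp at h2; linarith
      linarith
    have hB : (1 : ℂ) - Ec⁻¹ * p⁻¹ ≠ 0 := by
      intro h
      rw [sub_eq_zero] at h
      have h2 : ‖Ec⁻¹ * p⁻¹‖ = 1 := by rw [← h]; simp
      rw [norm_mul, norm_inv, norm_inv, hp1, inv_one, mul_one, hEc,
        Complex.norm_real, Real.norm_eq_abs, abs_of_pos (Real.exp_pos η)] at h2
      have : Real.exp η = 1 := by
        field_simp at h2; linarith
      linarith
    have hcne : (Ec + Ec⁻¹) / 2 - (p + p⁻¹) / 2 ≠ 0 := by
      rw [← hcoshE, ← hcosp, ← Complex.ofReal_sub]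
      exact_mod_cast hc.ne'
    have hA' : Ec - p ≠ 0 := by
      intro h; rw [sub_eq_zero] at h
      have h2 : ‖Ec‖ = 1 := by rw [h, hp1]
      rw [hEc, Complex.norm_real, Real.norm_eq_abs, abs_of_pos (Real.exp_pos η)] at h2; linarith
    have hB' : Ec * p - 1 ≠ 0 := by
      intro h; rw [sub_eq_zero] at h
      have h2 : ‖Ec * p‖ = 1 := by rw [h]; simp
      rw [norm_mul, hp1, mul_one, hEc, Complex.norm_real, Real.norm_eq_abs,
        abs_of_pos (Real.exp_pos η)] at h2; linarith
    have hD : Ec ^ 2 * p + p - Ec * p ^ 2 - Ec ≠ 0 := by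
      have hfac : Ec ^ 2 * p + p - Ec * p ^ 2 - Ec
          = (Ec * p) * (((Ec + Ec⁻¹) / 2 - (p + p⁻¹) / 2) * 2) := by
        field_simp; ring
      rw [hfac]
      exact mul_ne_zero (mul_ne_zero hE0 hp0) (mul_ne_zero hcne two_ne_zero)
    have key : ((S.re : ℝ) : ℂ)
        = ((Real.sinh η ^ 3 / (Real.cosh η - Real.cos ψ) ^ 2 : ℝ) : ℂ) := by
      have h2re : ((S.re : ℝ) : ℂ) = (S + (starRingEnd ℂ) S) / 2 := by
        rw [Complex.add_conj]; push_cast; ring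
      rw [h2re, hSdef]
      simp only [map_sub, map_add, map_mul, map_div₀, map_inv₀, map_pow,
        map_one, Complex.conj_ofReal, hconjw]
      rw [hu]
      simp only [Complex.ofReal_mul, Complex.ofReal_ofNat, Complex.ofReal_div,
        Complex.ofReal_pow, Complex.ofReal_sub]
      rw [hcoshE, hsinhE, hcosp]
      have e1 : (1 : ℂ) - Ec⁻¹ * p = (Ec - p) / Ec := by field_simp
      have e2 : (1 : ℂ) - Ec⁻¹ * p⁻¹ = (Ec * p - 1) / (Ec * p) := by
        field_simp
      have e3 : (Ec + Ec⁻¹) / 2 - (p + p⁻¹) / 2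
          = (Ec - p) * (Ec * p - 1) / (2 * Ec * p) := by
        field_simp; ring
      have e4 : Ec⁻¹ * p = p / Ec := by field_simp
      have e5 : Ec⁻¹ * p⁻¹ = 1 / (Ec * p) := by field_simp
      rw [e1, e2, e3, e4, e5]
      obtain ⟨a, ha⟩ : ∃ a, a = Ec - p := ⟨_, rfl⟩
      obtain ⟨b, hb⟩ : ∃ b, b = Ec * p - 1 := ⟨_, rfl⟩
      rw [← ha, ← hb]
      have ha0 : a ≠ 0 := by rw [ha]; exact hA'
      have hb0 : b ≠ 0 := by rw [hb]; exact hB'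
      have ht1 : 2 * ((Ec + Ec⁻¹) / 2) * (a / Ec)⁻¹ = (Ec * Ec + 1) / a := by
        rw [inv_div]; field_simp
      have ht2 : 2 * ((Ec - Ec⁻¹) / 2) * (p / Ec / (a / Ec) ^ 2)
          = (Ec * Ec - 1) * p / a ^ 2 := by
        field_simp
      have ht4 : 2 * ((Ec + Ec⁻¹) / 2) * (b / (Ec * p))⁻¹
          = (Ec * Ec + 1) * p / b := by
        rw [inv_div]; field_simp
      have ht5 : 2 * ((Ec - Ec⁻¹) / 2) * (1 / (Ec * p) / (b / (Ec * p)) ^ 2)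
          = (Ec * Ec - 1) * p / b ^ 2 := by
        field_simp
      have hR : ((Ec - Ec⁻¹) / 2) ^ 3 / (a * b / (2 * Ec * p)) ^ 2
          = (Ec * Ec - 1) ^ 3 * p ^ 2 / (2 * Ec * (a ^ 2 * b ^ 2)) := by
        field_simp [ha0, hb0]
      have hCh : (Ec + Ec⁻¹) / 2 = (Ec * Ec + 1) / (2 * Ec) := by
        rw [div_eq_div_iff two_ne_zero (mul_ne_zero two_ne_zero hE0)]
        field_simp
      rw [ht1, ht2, ht4, ht5, hR, hCh]
      have hden : (2 : ℂ) * Ec * (a ^ 2 * b ^ 2) ≠ 0 :=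
        mul_ne_zero (mul_ne_zero two_ne_zero hE0)
          (mul_ne_zero (pow_ne_zero _ ha0) (pow_ne_zero _ hb0))
      rw [div_eq_div_iff two_ne_zero hden]
      simp only [add_mul, sub_mul]
      have hm1 : (Ec * Ec + 1) / a * (2 * Ec * (a ^ 2 * b ^ 2))
          = (Ec * Ec + 1) * (2 * Ec * (a * b ^ 2)) := by
        field_simp [ha0]
      have hm2 : (Ec * Ec * p - 1 * p) / a ^ 2 * (2 * Ec * (a ^ 2 * b ^ 2))
          = (Ec * Ec - 1) * p * (2 * Ec * b ^ 2) := by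
        field_simp [ha0]
      have hm3 : (Ec * Ec + 1) / (2 * Ec) * (2 * Ec * (a ^ 2 * b ^ 2))
          = (Ec * Ec + 1) * (a ^ 2 * b ^ 2) := by
        field_simp
      have hm4 : (Ec * Ec * p + 1 * p) / b * (2 * Ec * (a ^ 2 * b ^ 2))
          = (Ec * Ec + 1) * p * (2 * Ec * (a ^ 2 * b)) := by
        field_simp [hb0]
      have hm5 : (Ec * Ec * p - 1 * p) / b ^ 2 * (2 * Ec * (a ^ 2 * b ^ 2))
          = (Ec * Ec - 1) * p * (2 * Ec * a ^ 2) := by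
        field_simp [hb0]
      rw [hm1, hm2, hm3, hm4, hm5]
      subst ha hb
      ring
    exact_mod_cast key
  rw [hSre]
  field_simp
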